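/- Let σ ∈ (0,1], C > 0, let v : ℕ → ℝ be a sequence of positive reals with v(N)/N^σ → C as N → ∞, and let e : ℕ → ℝ be a sequence with e(N) = O(min(N^((1+σ)/2), N^((3σ)/2))) as N → ∞. Then e(N) = O((v(N))^γ) as N → ∞, where γ = min((1+σ)/(2σ), 3/2); moreover γ < 2. (This is the Corollary to Propositions 1 and 2: the number of edges grows sub-quadratically in the number of vertices, so the graph is sparse for all values of σ.) -/

import Mathlib

open Real Filter Asymptotics

/-- Corollary: sparsity for all σ: if the number of vertices
grows as `v(N) ~ C·N^σ` and the number of edges satisfies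
`e(N) = O(min(N^((1+σ)/2), N^((3σ)/2)))`, then `e(N) = O(v(N)^γ)` with
`γ = min((1+σ)/(2σ), 3/2) < 2`, so the graph is sparse. -/
theorem graph_sparse_subquadratic (σ C : ℝ) (v e : ℕ → ℝ)
    (hσ : σ ∈ Set.Ioc (0 : ℝ) 1) (hC : 0 < C) (hv : ∀ N, 0 < v N)
    (hvC : Tendsto (fun N : ℕ => v N / (N : ℝ) ^ σ) atTop (nhds C))
    (he : e =O[atTop]
      (fun N : ℕ => min ((N : ℝ) ^ ((1 + σ) / 2)) ((N : ℝ) ^ (3 * σ / 2)))) :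
    (e =O[atTop] (fun N : ℕ => v N ^ min ((1 + σ) / (2 * σ)) (3 / 2))) ∧
    min ((1 + σ) / (2 * σ)) (3 / 2) < 2 := by
  obtain ⟨hσ0, hσ1⟩ := hσ
  set γ := min ((1 + σ) / (2 * σ)) (3 / 2) with hγ
  have hσγ : σ * γ = min ((1 + σ) / 2) (3 * σ / 2) := by
    rw [hγ, mul_min_of_nonneg _ _ hσ0.le]
    congr 1
    · field_simp
    · ring
  have hγ0 : 0 < γ := by
    apply lt_min
    · positivity
    · norm_num
  constructor
  · have hlim : Tendsto (fun N : ℕ => ((v N / (N : ℝ) ^ σ) ^ γ)⁻¹) atTop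
        (nhds ((C ^ γ)⁻¹)) :=
      (hvC.rpow_const (Or.inl hC.ne')).inv₀ (by positivity)
    have hO1 : (fun N : ℕ => ((v N / (N : ℝ) ^ σ) ^ γ)⁻¹) =O[atTop]
        (fun _ => (1 : ℝ)) := hlim.isBigO_one ℝ
    have hmul : (fun N : ℕ => ((v N / (N : ℝ) ^ σ) ^ γ)⁻¹ * v N ^ γ) =O[atTop]
        (fun N => v N ^ γ) := by
      simpa using hO1.mul (isBigO_refl (fun N : ℕ => v N ^ γ) atTop)
    have heq : (fun N : ℕ => (N : ℝ) ^ (σ * γ)) =ᶠ[atTop]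
        fun N => ((v N / (N : ℝ) ^ σ) ^ γ)⁻¹ * v N ^ γ := by
      filter_upwards [eventually_ge_atTop 1] with N hN
      have hN0 : (0 : ℝ) < (N : ℝ) := by exact_mod_cast hN
      rw [Real.div_rpow (hv N).le (Real.rpow_nonneg hN0.le σ),
        ← Real.rpow_mul hN0.le]
      have h1 : (0 : ℝ) < v N ^ γ := Real.rpow_pos_of_pos (hv N) γ
      have h2 : (0 : ℝ) < (N : ℝ) ^ (σ * γ) := Real.rpow_pos_of_pos hN0 _
      field_simp
    have hmain : (fun N : ℕ => (N : ℝ) ^ (σ * γ)) =O[atTop]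
        (fun N => v N ^ γ) := heq.trans_isBigO hmul
    have heq2 : (fun N : ℕ => min ((N : ℝ) ^ ((1 + σ) / 2)) ((N : ℝ) ^ (3 * σ / 2)))
        =ᶠ[atTop] fun N => (N : ℝ) ^ (σ * γ) := by
      filter_upwards [eventually_ge_atTop 1] with N hN
      have h1 : (1 : ℝ) ≤ (N : ℝ) := by exact_mod_cast hN
      rw [hσγ]
      rcases le_total ((1 + σ) / 2) (3 * σ / 2) with h | h
      · rw [min_eq_left (Real.rpow_le_rpow_of_exponent_le h1 h), min_eq_left h]
      · rw [min_eq_right (Real.rpow_le_rpow_of_exponent_le h1 h), min_eq_right h]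
    exact he.trans (heq2.trans_isBigO hmain)
  · exact min_lt_of_right_lt (by norm_num)
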